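/- Let σ̂ : ℝ → ℝ be a non-constant, monotone increasing, bounded continuous function. Let K be a compact subset of ℝⁿ and let f : K → ℝ^d be continuous. Then for every ε > 0 there exist an integer N > 0, a real d×N matrix A, a real N×n matrix B, and a vector θ ∈ ℝᴺ such that max over x ∈ K of ‖f(x) − A·σ̂_N(Bx + θ)‖ ≤ ε, where σ̂_N : ℝᴺ → ℝᴺ applies σ̂ to each coordinate, i.e. σ̂_N(u₁, …, u_N) = (σ̂(u₁), …, σ̂(u_N)). -/

import Mathlib

set_option maxHeartbeats 1000000

open Filter Finset

open Matrix

lemma ua_net1d (s : ℝ → ℝ) (hmono : Monotone s)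
    (hs0 : Tendsto s atBot (nhds 0)) (hs1 : Tendsto s atTop (nhds 1))
    (g : ℝ → ℝ) (hg : Continuous g) (a b : ℝ) (hab : a < b) (ε : ℝ) (hε : 0 < ε) :
    ∃ (k : ℕ) (c w θ : Fin k → ℝ), ∀ x ∈ Set.Icc a b,
      |g x - (g a + ∑ i, c i * s (w i * x + θ i))| ≤ ε := by
  have hs_mem : ∀ y, 0 ≤ s y ∧ s y ≤ 1 :=
    fun y => ⟨hmono.le_of_tendsto hs0 y, hmono.ge_of_tendsto hs1 y⟩
  obtain ⟨δ, hδ, hunif⟩ : ∃ δ > 0, ∀ x ∈ Set.Icc a b, ∀ y ∈ Set.Icc a b,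
      dist x y ≤ δ → dist (g x) (g y) ≤ ε/4 := by
    have := (isCompact_Icc (a := a) (b := b)).uniformContinuousOn_of_continuous
      hg.continuousOn
    exact Metric.uniformContinuousOn_iff_le.mp this (ε/4) (by positivity)
  set k : ℕ := ⌈(b - a)/δ⌉₊ + 1 with hkdef
  have hk0 : 0 < k := Nat.succ_pos _
  have hkR : (0:ℝ) < (k:ℝ) := by exact_mod_cast hk0
  set h : ℝ := (b - a)/k with hhdef
  have hbapos : 0 < b - a := sub_pos.mpr hab
  have hhpos : 0 < h := div_pos hbapos hkR
  have hkh : (k:ℝ) * h = b - a := by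
    rw [hhdef]; field_simp
  have hhδ : h ≤ δ := by
    rw [hhdef, div_le_iff₀ hkR]
    have h1 : (b - a)/δ ≤ (k : ℝ) := by
      refine (Nat.le_ceil _).trans ?_
      exact_mod_cast Nat.le_succ _
    rw [div_le_iff₀ hδ] at h1
    linarith
  set t : ℕ → ℝ := fun i => a + i * h with htdef
  have htmem : ∀ i, i ≤ k → t i ∈ Set.Icc a b := by
    intro i hi
    have hik : (i:ℝ) ≤ (k:ℝ) := by exact_mod_cast hi
    constructor
    · simp only [htdef]; nlinarith
    · simp only [htdef]; nlinarith
  set Δ : ℕ → ℝ := fun i => g (t (i+1)) - g (t i) with hΔdef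
  have hΔsmall : ∀ i, i < k → |Δ i| ≤ ε/4 := by
    intro i hik
    have h1 := htmem (i+1) (by omega)
    have h2 := htmem i hik.le
    have hd : dist (t (i+1)) (t i) ≤ δ := by
      rw [Real.dist_eq]
      have : t (i+1) - t i = h := by simp only [htdef]; push_cast; ring
      rw [this, abs_of_pos hhpos]; exact hhδ
    have := hunif _ h1 _ h2 hd
    rwa [Real.dist_eq] at this
  set S : ℝ := ∑ i ∈ Finset.range k, |Δ i| with hSdef
  have hSnn : 0 ≤ S := Finset.sum_nonneg fun i _ => abs_nonneg _
  set δ' : ℝ := (ε/4)/(S+1) with hδ'def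
  have hδ'pos : 0 < δ' := by positivity
  obtain ⟨R1, hR1⟩ := eventually_atTop.mp (Metric.tendsto_nhds.mp hs1 δ' hδ'pos)
  obtain ⟨R0, hR0⟩ := eventually_atBot.mp (Metric.tendsto_nhds.mp hs0 δ' hδ'pos)
  set R : ℝ := max R1 (max (-R0) 1) with hRdef
  have hRpos : (0:ℝ) < R := lt_of_lt_of_le one_pos (le_max_of_le_right (le_max_right _ _))
  have hRtop : ∀ y, R ≤ y → |s y - 1| ≤ δ' := by
    intro y hy
    have := hR1 y (le_trans (le_max_left _ _) hy)
    rw [Real.dist_eq] at this; exact this.le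
  have hRbot : ∀ y, y ≤ -R → |s y| ≤ δ' := by
    intro y hy
    have hR0R : -R ≤ R0 := by
      have : -R0 ≤ R := le_max_of_le_right (le_max_left _ _)
      linarith
    have := hR0 y (hy.trans hR0R)
    rw [Real.dist_eq, sub_zero] at this; exact this.le
  set lam : ℝ := R / h with hlamdef
  have hlampos : 0 < lam := div_pos hRpos hhpos
  have hlamh : lam * h = R := div_mul_cancel₀ _ (ne_of_gt hhpos)
  refine ⟨k, fun i => Δ i, fun _ => lam, fun i => -(lam * t i), ?_⟩
  intro x hx
  set j : ℕ := min ⌊(x - a)/h⌋₊ (k - 1) with hjdef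
  have hjk : j < k := lt_of_le_of_lt (min_le_right _ _) (by omega)
  have hxa : 0 ≤ (x - a)/h := div_nonneg (by linarith [hx.1]) hhpos.le
  have htjx : t j ≤ x := by
    have h1 : (j:ℝ) ≤ (x - a)/h := by
      have h2 : (j:ℝ) ≤ (⌊(x - a)/h⌋₊ : ℝ) := by exact_mod_cast min_le_left _ _
      exact h2.trans (Nat.floor_le hxa)
    have h3 : (j:ℝ) * h ≤ x - a := (le_div_iff₀ hhpos).mp h1
    simp only [htdef]; linarith
  have hxtj1 : x ≤ t (j+1) := by
    by_cases hc : ⌊(x - a)/h⌋₊ ≤ k - 1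
    · have hj : j = ⌊(x - a)/h⌋₊ := min_eq_left hc
      have h2 : (x - a)/h < (⌊(x - a)/h⌋₊ : ℝ) + 1 := Nat.lt_floor_add_one _
      have h3 : x - a < ((⌊(x - a)/h⌋₊ : ℝ) + 1) * h := (div_lt_iff₀ hhpos).mp h2
      simp only [htdef, hj]; push_cast; nlinarith
    · have hj : j = k - 1 := min_eq_right (le_of_not_ge hc)
      have hjs : j + 1 = k := by omega
      have : t (j+1) = b := by rw [hjs]; simp only [htdef]; linarith [hkh]
      rw [this]; exact hx.2
  have key : g x - (g a + ∑ i ∈ Finset.range k, Δ i * s (lam * x + -(lam * t i)))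
      = (g x - g (t j)) + ∑ i ∈ Finset.range k,
          Δ i * ((if i < j then (1:ℝ) else 0) - s (lam * x + -(lam * t i))) := by
    have tele : ∑ i ∈ Finset.range j, Δ i = g (t j) - g a := by
      simp only [hΔdef]
      rw [Finset.sum_range_sub (fun i => g (t i)) j]
      have ht0 : t 0 = a := by simp [htdef]
      rw [ht0]
    have split : ∑ i ∈ Finset.range k, Δ i * (if i < j then (1:ℝ) else 0)
        = ∑ i ∈ Finset.range j, Δ i := by
      rw [← Finset.sum_subset (Finset.range_subset_range.mpr hjk.le)
          (fun i _ hi => by rw [if_neg (by simpa using hi), mul_zero])]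
      exact Finset.sum_congr rfl fun i hi => by
        rw [if_pos (Finset.mem_range.mp hi), mul_one]
    simp only [mul_sub]
    rw [Finset.sum_sub_distrib, split, tele]
    ring
  have hgxtj : |g x - g (t j)| ≤ ε/4 := by
    have hd : dist x (t j) ≤ δ := by
      rw [Real.dist_eq, abs_of_nonneg (by linarith)]
      have : t (j+1) - t j = h := by simp only [htdef]; push_cast; ring
      linarith
    have := hunif x hx (t j) (htmem j hjk.le) hd
    rwa [Real.dist_eq] at this
  have perterm : ∀ i ∈ Finset.range k,
      |Δ i * ((if i < j then (1:ℝ) else 0) - s (lam * x + -(lam * t i)))|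
        ≤ (if i = j then ε/4 else 0) + (if i = j+1 then ε/4 else 0) + |Δ i| * δ' := by
    intro i hi
    have hik := Finset.mem_range.mp hi
    have harg : lam * x + -(lam * t i) = lam * (x - t i) := by ring
    rw [abs_mul, harg]
    have hsmem := hs_mem (lam * (x - t i))
    have habs1 : |(if i < j then (1:ℝ) else 0) - s (lam * (x - t i))| ≤ 1 := by
      split <;> rw [abs_le] <;> constructor <;> linarith [hsmem.1, hsmem.2]
    have hCnn : (0:ℝ) ≤ |Δ i| * δ' := by positivity
    have hb : |Δ i| * |(if i < j then (1:ℝ) else 0) - s (lam * (x - t i))| ≤ ε/4 := by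
      calc |Δ i| * _ ≤ (ε/4) * 1 :=
            mul_le_mul (hΔsmall i hik) habs1 (abs_nonneg _) (by linarith)
        _ = ε/4 := mul_one _
    by_cases h1 : i = j
    · have hn2 : (0:ℝ) ≤ (if i = j + 1 then ε/4 else 0) := by split <;> linarith
      rw [if_pos h1]
      linarith
    by_cases h2 : i = j + 1
    · rw [if_neg h1, if_pos h2]
      linarith
    rw [if_neg h1, if_neg h2]
    have hfar : |(if i < j then (1:ℝ) else 0) - s (lam * (x - t i))| ≤ δ' := by
      by_cases h3 : i < j
      · rw [if_pos h3]
        have hstep : t i + h ≤ t j := by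
          have hij : ((i:ℝ) + 1) ≤ (j:ℝ) := by exact_mod_cast h3
          simp only [htdef]; nlinarith
        have hxi : h ≤ x - t i := by linarith
        have hR' : R ≤ lam * (x - t i) := by
          calc R = lam * h := hlamh.symm
            _ ≤ lam * (x - t i) := by nlinarith
        have := hRtop _ hR'
        rwa [abs_sub_comm] at this
      · rw [if_neg h3]
        have hij : j + 2 ≤ i := by omega
        have hstep : t (j+1) + h ≤ t i := by
          have : ((j:ℝ) + 2) ≤ (i:ℝ) := by exact_mod_cast hij
          simp only [htdef]; push_cast; nlinarith
        have hxi : x - t i ≤ -h := by linarith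
        have hR' : lam * (x - t i) ≤ -R := by
          calc lam * (x - t i) ≤ lam * (-h) := by nlinarith
            _ = -R := by rw [mul_neg, hlamh]
        have := hRbot _ hR'
        rw [zero_sub, abs_neg]; exact this
    calc |Δ i| * |(if i < j then (1:ℝ) else 0) - s (lam * (x - t i))|
        ≤ |Δ i| * δ' := mul_le_mul_of_nonneg_left hfar (abs_nonneg _)
      _ ≤ 0 + 0 + |Δ i| * δ' := by linarith
  have sum_bound : ∑ i ∈ Finset.range k,
      |Δ i * ((if i < j then (1:ℝ) else 0) - s (lam * x + -(lam * t i)))| ≤ 3 * (ε/4) := by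
    calc ∑ i ∈ Finset.range k, |Δ i * ((if i < j then (1:ℝ) else 0) - s (lam * x + -(lam * t i)))|
        ≤ ∑ i ∈ Finset.range k,
            ((if i = j then ε/4 else 0) + (if i = j+1 then ε/4 else 0) + |Δ i| * δ') :=
          Finset.sum_le_sum perterm
      _ = (∑ i ∈ Finset.range k, (if i = j then ε/4 else 0))
          + (∑ i ∈ Finset.range k, (if i = j+1 then ε/4 else 0))
          + (∑ i ∈ Finset.range k, |Δ i| * δ') := by
          rw [Finset.sum_add_distrib, Finset.sum_add_distrib]
      _ ≤ ε/4 + ε/4 + ε/4 := by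
          have e1 : (∑ i ∈ Finset.range k, (if i = j then ε/4 else 0)) ≤ ε/4 := by
            rw [Finset.sum_ite_eq' (Finset.range k) j (fun _ => ε/4)]
            split <;> linarith
          have e2 : (∑ i ∈ Finset.range k, (if i = j+1 then ε/4 else 0)) ≤ ε/4 := by
            rw [Finset.sum_ite_eq' (Finset.range k) (j+1) (fun _ => ε/4)]
            split <;> linarith
          have e3 : (∑ i ∈ Finset.range k, |Δ i| * δ') ≤ ε/4 := by
            rw [← Finset.sum_mul, ← hSdef]
            calc S * δ' = (ε/4) * (S/(S+1)) := by rw [hδ'def]; ring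
              _ ≤ (ε/4) * 1 := by
                  apply mul_le_mul_of_nonneg_left _ (by linarith)
                  rw [div_le_one (by linarith)]; linarith
              _ = ε/4 := mul_one _
          linarith
      _ = 3 * (ε/4) := by ring
  rw [Fin.sum_univ_eq_sum_range (fun i => Δ i * s (lam * x + -(lam * t i))) k]
  calc |g x - (g a + ∑ i ∈ Finset.range k, Δ i * s (lam * x + -(lam * t i)))|
      = |(g x - g (t j)) + ∑ i ∈ Finset.range k,
          Δ i * ((if i < j then (1:ℝ) else 0) - s (lam * x + -(lam * t i)))| := by rw [key]
    _ ≤ |g x - g (t j)| + |∑ i ∈ Finset.range k,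
          Δ i * ((if i < j then (1:ℝ) else 0) - s (lam * x + -(lam * t i)))| := abs_add_le _ _
    _ ≤ ε/4 + 3 * (ε/4) := add_le_add hgxtj
        ((Finset.abs_sum_le_sum_abs _ _).trans sum_bound)
    _ = ε := by ring

lemma ua_netsig (σhat : ℝ → ℝ) (hmono : Monotone σhat)
    (hnonconst : ∃ x y : ℝ, σhat x ≠ σhat y)
    (hbdd : ∃ C : ℝ, ∀ x : ℝ, |σhat x| ≤ C)
    (g : ℝ → ℝ) (hg : Continuous g) (a b ε : ℝ) (hε : 0 < ε) :
    ∃ (k : ℕ) (c w θ : Fin k → ℝ), ∀ x ∈ Set.Icc a b,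
      |g x - ∑ i, c i * σhat (w i * x + θ i)| ≤ ε := by
  obtain ⟨C, hC⟩ := hbdd
  have hAbove : BddAbove (Set.range σhat) := ⟨C, by rintro _ ⟨x, rfl⟩; exact (abs_le.mp (hC x)).2⟩
  have hBelow : BddBelow (Set.range σhat) := ⟨-C, by rintro _ ⟨x, rfl⟩; exact (abs_le.mp (hC x)).1⟩
  set M : ℝ := ⨆ x, σhat x with hM
  set m : ℝ := ⨅ x, σhat x with hm
  have htop : Tendsto σhat atTop (nhds M) := tendsto_atTop_ciSup hmono hAbove
  have hbot : Tendsto σhat atBot (nhds m) := tendsto_atBot_ciInf hmono hBelow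
  have hmM : m < M := by
    obtain ⟨x, y, hxy⟩ := hnonconst
    rcases lt_or_gt_of_ne hxy with hlt | hgt
    · exact lt_of_le_of_lt (ciInf_le hBelow x) (lt_of_lt_of_le hlt (le_ciSup hAbove y))
    · exact lt_of_le_of_lt (ciInf_le hBelow y) (lt_of_lt_of_le hgt (le_ciSup hAbove x))
  have hMm : (0:ℝ) < M - m := sub_pos.mpr hmM
  have hne : M - m ≠ 0 := ne_of_gt hMm
  obtain ⟨θs, hθs⟩ : ∃ θs, σhat θs ≠ 0 := by
    obtain ⟨x, y, hxy⟩ := hnonconst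
    by_cases hx : σhat x = 0
    · exact ⟨y, fun hy => hxy (by rw [hx, hy])⟩
    · exact ⟨x, hx⟩
  set s : ℝ → ℝ := fun u => (σhat u - m) / (M - m) with hs
  have hsmono : Monotone s := fun u v huv => by
    simp only [hs]
    exact (div_le_div_iff_of_pos_right hMm).mpr (by linarith [hmono huv])
  have hs0 : Tendsto s atBot (nhds 0) := by
    have := (hbot.sub_const m).div_const (M - m)
    simpa [hs, sub_self, zero_div] using this
  have hs1 : Tendsto s atTop (nhds 1) := by
    have := (htop.sub_const m).div_const (M - m)
    rw [div_self hne] at this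
    exact this
  obtain ⟨k, c, w, θ, hnet⟩ := ua_net1d s hsmono hs0 hs1 g hg a (max b (a+1))
    (lt_of_lt_of_le (lt_add_one a) (le_max_right _ _)) ε hε
  refine ⟨k+1,
    Fin.snoc (fun i => c i / (M - m)) ((g a - (∑ i, c i) * (m / (M - m))) / σhat θs),
    Fin.snoc w 0, Fin.snoc θ θs, ?_⟩
  intro x hx
  have hx' : x ∈ Set.Icc a (max b (a+1)) := ⟨hx.1, hx.2.trans (le_max_left _ _)⟩
  have hnx := hnet x hx'
  have hterm : ∀ i : Fin k, c i * s (w i * x + θ i)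
      = (c i / (M - m)) * σhat (w i * x + θ i) - c i * (m / (M - m)) := by
    intro i; simp only [hs]; field_simp
  have hrw : (∑ i : Fin (k+1),
        (Fin.snoc (fun i => c i / (M - m))
          ((g a - (∑ i, c i) * (m / (M - m))) / σhat θs) : Fin (k+1) → ℝ) i
        * σhat ((Fin.snoc w 0 : Fin (k+1) → ℝ) i * x + (Fin.snoc θ θs : Fin (k+1) → ℝ) i))
      = g a + ∑ i : Fin k, c i * s (w i * x + θ i) := by
    rw [Fin.sum_univ_castSucc]
    simp only [Fin.snoc_castSucc, Fin.snoc_last]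
    rw [zero_mul, zero_add, div_mul_cancel₀ _ hθs]
    simp only [hterm]
    rw [Finset.sum_sub_distrib, ← Finset.sum_mul]
    ring
  rw [hrw]
  exact hnx

lemma ua_coord (σhat : ℝ → ℝ) (hmono : Monotone σhat)
    (hnonconst : ∃ x y : ℝ, σhat x ≠ σhat y)
    (hbdd : ∃ C : ℝ, ∀ x : ℝ, |σhat x| ≤ C)
    (n : ℕ) (K : Set (EuclideanSpace ℝ (Fin n))) (hK : IsCompact K)
    (g : EuclideanSpace ℝ (Fin n) → ℝ) (hg : ContinuousOn g K)
    (ε : ℝ) (hε : 0 < ε) :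
    ∃ (k : ℕ) (a : Fin k → ℝ) (b : Fin k → Fin n → ℝ) (θ : Fin k → ℝ),
      ∀ x ∈ K, |g x - ∑ q, a q * σhat (∑ i, b q i * x i + θ q)| ≤ ε := by
  haveI : CompactSpace K := isCompact_iff_compactSpace.mp hK
  have hcont_coord : ∀ i : Fin n, Continuous fun x : K => (x : EuclideanSpace ℝ (Fin n)) i :=
    fun i => (EuclideanSpace.proj i (𝕜 := ℝ)).continuous.comp continuous_subtype_val
  set expC : (Fin n → ℝ) → C(K, ℝ) := fun β =>
    ⟨fun x => Real.exp (∑ i, β i * (x : EuclideanSpace ℝ (Fin n)) i),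
     Real.continuous_exp.comp (continuous_finset_sum _
       (fun i _ => continuous_const.mul (hcont_coord i)))⟩ with hexpC
  have hmul : ∀ β γ, expC β * expC γ = expC (β + γ) := by
    intro β γ; ext x
    simp only [hexpC, ContinuousMap.mul_apply, ContinuousMap.coe_mk, ← Real.exp_add,
      ← Finset.sum_add_distrib, Pi.add_apply, add_mul]
  have hone : (1 : C(K, ℝ)) = expC 0 := by
    ext x; simp [hexpC]
  set Mon : Submonoid C(K, ℝ) :=
    { carrier := Set.range expC
      one_mem' := ⟨0, hone.symm⟩
      mul_mem' := by rintro _ _ ⟨β, rfl⟩ ⟨γ, rfl⟩; exact ⟨β + γ, (hmul β γ).symm⟩ } with hMon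
  have hsep : (Algebra.adjoin ℝ (Set.range expC)).SeparatesPoints := by
    intro x y hxy
    have hxy' : (x : EuclideanSpace ℝ (Fin n)) ≠ (y : EuclideanSpace ℝ (Fin n)) :=
      fun h => hxy (Subtype.ext h)
    obtain ⟨i, hi⟩ : ∃ i, (x : EuclideanSpace ℝ (Fin n)) i ≠ (y : EuclideanSpace ℝ (Fin n)) i := by
      by_contra hcon
      push_neg at hcon
      exact hxy' (WithLp.ofLp_injective 2 (funext hcon))
    refine ⟨_, ⟨expC (Pi.single i 1), Algebra.subset_adjoin ⟨Pi.single i 1, rfl⟩, rfl⟩, ?_⟩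
    have hval : ∀ z : K, expC (Pi.single i 1) z
        = Real.exp ((z : EuclideanSpace ℝ (Fin n)) i) := by
      intro z
      simp only [hexpC, ContinuousMap.coe_mk]
      congr 1
      rw [Finset.sum_eq_single i]
      · simp
      · intro j _ hj; simp [Pi.single_apply, hj]
      · intro hmem; exact absurd (Finset.mem_univ i) hmem
    refine fun h => hi (Real.exp_injective ?_)
    rw [← hval x, ← hval y]
    exact h
  set F : C(K, ℝ) := ⟨K.restrict g, hg.restrict⟩ with hF
  obtain ⟨g', hg'⟩ := ContinuousMap.exists_mem_subalgebra_near_continuousMap_of_separatesPoints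
    (Algebra.adjoin ℝ (Set.range expC)) hsep F (ε/2) (by positivity)
  have hptwise : ∀ z : K, |(g' : C(K, ℝ)) z - g z| ≤ ε/2 := by
    intro z
    have h1 : ‖((g' : C(K, ℝ)) - F) z‖ ≤ ‖(g' : C(K, ℝ)) - F‖ :=
      ContinuousMap.norm_coe_le_norm _ z
    have h2 : ((g' : C(K, ℝ)) - F) z = (g' : C(K, ℝ)) z - g z := by
      simp [hF, ContinuousMap.sub_apply]
      rfl
    rw [h2, Real.norm_eq_abs] at h1
    exact h1.trans hg'.le
  -- g' is a linear combination of exponentials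
  have hmem : (g' : C(K, ℝ)) ∈ Submodule.span ℝ (Set.range expC) := by
    have h1 : (g' : C(K, ℝ)) ∈ Subalgebra.toSubmodule (Algebra.adjoin ℝ (Set.range expC)) :=
      g'.2
    rw [Algebra.adjoin_eq_span] at h1
    have h2 : (Submonoid.closure (Set.range expC) : Set C(K, ℝ)) = Set.range expC := by
      have h3 : Set.range expC = (Mon : Set C(K, ℝ)) := rfl
      rw [h3, Submonoid.closure_eq]
    rwa [h2] at h1
  rw [Submodule.mem_span_set'] at hmem
  obtain ⟨m, cf, vf, heq⟩ := hmem
  have hβ : ∀ p, ∃ β : Fin n → ℝ, expC β = (vf p : C(K, ℝ)) := fun p => (vf p).2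
  choose β hβval using hβ
  have happ : ∀ z : K, (g' : C(K, ℝ)) z
      = ∑ p, cf p * Real.exp (∑ i, β p i * (z : EuclideanSpace ℝ (Fin n)) i) := by
    intro z
    rw [← heq]
    have : ((∑ p, cf p • (vf p : C(K, ℝ))) : C(K, ℝ)) z
        = ∑ p, cf p * ((vf p : C(K, ℝ)) z) := by
      simp
    rw [this]
    refine Finset.sum_congr rfl fun p _ => ?_
    rw [← hβval p]
    simp [hexpC]
  -- bound the linear arguments on K
  obtain ⟨CK, hCK⟩ := isBounded_iff_forall_norm_le.mp hK.isBounded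
  have hcoordbd : ∀ (x : EuclideanSpace ℝ (Fin n)) (i : Fin n), |x i| ≤ ‖x‖ := by
    intro x i
    rw [EuclideanSpace.norm_eq]
    calc |x i| = Real.sqrt (‖x i‖^2) := by
          rw [Real.norm_eq_abs, Real.sqrt_sq_eq_abs, abs_abs]
      _ ≤ Real.sqrt (∑ j, ‖x j‖^2) :=
          Real.sqrt_le_sqrt (Finset.single_le_sum (f := fun j => ‖x j‖^2)
            (fun j _ => sq_nonneg _) (Finset.mem_univ i))
  set R : Fin m → ℝ := fun p => (∑ i, |β p i|) * CK with hR
  have hRmem : ∀ p, ∀ x ∈ K, (∑ i, β p i * x i) ∈ Set.Icc (-(R p)) (R p) := by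
    intro p x hx
    have habs : |∑ i, β p i * x i| ≤ R p := by
      calc |∑ i, β p i * x i| ≤ ∑ i, |β p i * x i| := Finset.abs_sum_le_sum_abs _ _
        _ ≤ ∑ i, |β p i| * CK := by
            refine Finset.sum_le_sum fun i _ => ?_
            rw [abs_mul]
            exact mul_le_mul_of_nonneg_left ((hcoordbd x i).trans (hCK x hx)) (abs_nonneg _)
        _ = R p := by simp only [hR]; rw [Finset.sum_mul]
    rw [Set.mem_Icc, ← abs_le]
    exact habs
  set εp : Fin m → ℝ := fun p => (ε/2) / ((m+1) * (|cf p| + 1)) with hεp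
  have hεppos : ∀ p, 0 < εp p := fun p => by
    rw [hεp]; positivity
  choose kp ap wp θp hp using fun p : Fin m =>
    ua_netsig σhat hmono hnonconst hbdd Real.exp Real.continuous_exp (-(R p)) (R p)
      (εp p) (hεppos p)
  -- assemble the network
  set I := (p : Fin m) × Fin (kp p) with hI
  set e : I ≃ Fin (Fintype.card I) := Fintype.equivFin I with he
  refine ⟨Fintype.card I,
    fun q => cf (e.symm q).1 * ap (e.symm q).1 (e.symm q).2,
    fun q => fun i => wp (e.symm q).1 (e.symm q).2 * β (e.symm q).1 i,
    fun q => θp (e.symm q).1 (e.symm q).2, ?_⟩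
  intro x hx
  set u : Fin m → ℝ := fun p => ∑ i, β p i * x i with hu
  have hsum : (∑ q, (cf (e.symm q).1 * ap (e.symm q).1 (e.symm q).2) *
        σhat ((∑ i, (wp (e.symm q).1 (e.symm q).2 * β (e.symm q).1 i) * x i)
          + θp (e.symm q).1 (e.symm q).2))
      = ∑ p, cf p * (∑ qq, ap p qq * σhat (wp p qq * u p + θp p qq)) := by
    calc (∑ q, (cf (e.symm q).1 * ap (e.symm q).1 (e.symm q).2) *
          σhat ((∑ i, (wp (e.symm q).1 (e.symm q).2 * β (e.symm q).1 i) * x i)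
            + θp (e.symm q).1 (e.symm q).2))
        = ∑ i : I, (cf (e.symm (e i)).1 * ap (e.symm (e i)).1 (e.symm (e i)).2) *
            σhat ((∑ j, (wp (e.symm (e i)).1 (e.symm (e i)).2 * β (e.symm (e i)).1 j) * x j)
              + θp (e.symm (e i)).1 (e.symm (e i)).2) :=
          (Equiv.sum_comp e _).symm
      _ = ∑ i : I, (cf i.1 * ap i.1 i.2) *
            σhat ((∑ j, (wp i.1 i.2 * β i.1 j) * x j) + θp i.1 i.2) :=
          Finset.sum_congr rfl fun i _ => by rw [Equiv.symm_apply_apply]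
      _ = ∑ p, ∑ qq, (cf p * ap p qq) *
            σhat ((∑ j, (wp p qq * β p j) * x j) + θp p qq) := by
          rw [← Finset.univ_sigma_univ, Finset.sum_sigma]
      _ = ∑ p, cf p * (∑ qq, ap p qq * σhat (wp p qq * u p + θp p qq)) := by
          refine Finset.sum_congr rfl fun p _ => ?_
          rw [Finset.mul_sum]
          refine Finset.sum_congr rfl fun qq _ => ?_
          have harg : (∑ j, (wp p qq * β p j) * x j) = wp p qq * u p := by
            rw [hu, Finset.mul_sum]
            exact Finset.sum_congr rfl fun j _ => by ring
          rw [harg]; ring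
  rw [hsum]
  have hclose : ∀ p : Fin m, |Real.exp (u p) - ∑ qq, ap p qq * σhat (wp p qq * u p + θp p qq)|
      ≤ εp p := fun p => hp p (u p) (hRmem p x hx)
  have hxK : (⟨x, hx⟩ : K) = (⟨x, hx⟩ : K) := rfl
  have hsw := hptwise ⟨x, hx⟩
  rw [happ ⟨x, hx⟩] at hsw
  have hgoal : |g x - ∑ p, cf p * (∑ qq, ap p qq * σhat (wp p qq * u p + θp p qq))|
      ≤ ε/2 + ∑ p, |cf p| * εp p := by
    have hdecomp : g x - ∑ p, cf p * (∑ qq, ap p qq * σhat (wp p qq * u p + θp p qq))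
        = (g x - ∑ p, cf p * Real.exp (u p))
          + ∑ p, cf p * (Real.exp (u p) - ∑ qq, ap p qq * σhat (wp p qq * u p + θp p qq)) := by
      simp only [mul_sub]
      rw [Finset.sum_sub_distrib]
      ring
    rw [hdecomp]
    refine (abs_add_le _ _).trans (add_le_add ?_ ?_)
    · rw [abs_sub_comm]
      exact hsw
    · refine (Finset.abs_sum_le_sum_abs _ _).trans (Finset.sum_le_sum fun p _ => ?_)
      rw [abs_mul]
      exact mul_le_mul_of_nonneg_left (hclose p) (abs_nonneg _)
  refine hgoal.trans ?_
  have hterm : ∀ p : Fin m, |cf p| * εp p ≤ (ε/2) / (m+1) := by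
    intro p
    have h2 : (0:ℝ) < (m:ℝ) + 1 := by positivity
    have h3 : (0:ℝ) < |cf p| + 1 := by linarith [abs_nonneg (cf p)]
    simp only [hεp]
    rw [← mul_div_assoc, div_le_div_iff₀ (by positivity) h2]
    nlinarith [mul_pos (half_pos hε) h2, abs_nonneg (cf p)]
  have hsum2 : ∑ p : Fin m, |cf p| * εp p ≤ (m : ℝ) * ((ε/2)/(m+1)) := by
    calc ∑ p : Fin m, |cf p| * εp p ≤ ∑ _p : Fin m, (ε/2)/(m+1) :=
          Finset.sum_le_sum fun p _ => hterm p
      _ = (m : ℝ) * ((ε/2)/(m+1)) := by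
          rw [Finset.sum_const, Finset.card_univ, Fintype.card_fin, nsmul_eq_mul]
  have hfin : (m : ℝ) * ((ε/2)/(m+1)) ≤ ε/2 := by
    have h2 : (0:ℝ) < (m:ℝ) + 1 := by positivity
    have hrw : (m:ℝ) * ((ε/2)/(m+1)) = (ε/2) * ((m:ℝ)/((m:ℝ)+1)) := by ring
    have hle : (m:ℝ)/((m:ℝ)+1) ≤ 1 := by rw [div_le_one h2]; linarith
    rw [hrw]
    nlinarith [mul_nonneg (half_pos hε).le (sub_nonneg.mpr hle)]
  linarith

/-- Universal approximation (Funahashi): for a sigmoid `σ̂` (non-constant, monotone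
increasing, bounded, continuous), a compact `K ⊆ ℝⁿ`, and a continuous `f : K → ℝ^d`,
for every `ε > 0` there are `N > 0`, matrices `A : d×N`, `B : N×n` and `θ ∈ ℝᴺ` with
`‖f x − A·σ̂_N(Bx + θ)‖ ≤ ε` for all `x ∈ K`, where `σ̂_N` applies `σ̂` coordinatewise. -/
theorem stmt_9 (σhat : ℝ → ℝ) (hmono : Monotone σhat)
    (hnonconst : ∃ x y : ℝ, σhat x ≠ σhat y)
    (hbdd : ∃ C : ℝ, ∀ x : ℝ, |σhat x| ≤ C)
    (hcont : Continuous σhat)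
    (n d : ℕ) (K : Set (EuclideanSpace ℝ (Fin n))) (hK : IsCompact K)
    (f : EuclideanSpace ℝ (Fin n) → EuclideanSpace ℝ (Fin d)) (hf : ContinuousOn f K)
    (ε : ℝ) (hε : 0 < ε) :
    ∃ N : ℕ, 0 < N ∧
      ∃ (A : Matrix (Fin d) (Fin N) ℝ) (B : Matrix (Fin N) (Fin n) ℝ) (θ : Fin N → ℝ),
        ∀ x ∈ K,
          ‖f x - (EuclideanSpace.equiv (Fin d) ℝ).symm
              (A *ᵥ fun i => σhat ((B *ᵥ (EuclideanSpace.equiv (Fin n) ℝ) x) i + θ i))‖ ≤ ε := by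
  have hsd : (0:ℝ) ≤ Real.sqrt d := Real.sqrt_nonneg _
  set ε' : ℝ := ε / (Real.sqrt d + 1) with hε'
  have hε'pos : 0 < ε' := by positivity
  have hgj : ∀ j : Fin d, ContinuousOn (fun x => f x j) K :=
    fun j => (EuclideanSpace.proj j (𝕜 := ℝ)).continuous.comp_continuousOn hf
  choose kj aj bj θj hj using fun j : Fin d =>
    ua_coord σhat hmono hnonconst hbdd n K hK (fun x => f x j) (hgj j) ε' hε'pos
  set I := ((j : Fin d) × Fin (kj j)) ⊕ Unit with hI
  haveI : Nonempty I := ⟨Sum.inr ()⟩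
  set N := Fintype.card I with hN
  have hNpos : 0 < N := Fintype.card_pos
  set e : I ≃ Fin N := Fintype.equivFin I with he
  set A : Matrix (Fin d) (Fin N) ℝ := fun j' q =>
    match e.symm q with
    | Sum.inl s => if s.1 = j' then aj s.1 s.2 else 0
    | Sum.inr _ => 0 with hA
  set B : Matrix (Fin N) (Fin n) ℝ := fun q i =>
    match e.symm q with
    | Sum.inl s => bj s.1 s.2 i
    | Sum.inr _ => 0 with hB
  set θv : Fin N → ℝ := fun q =>
    match e.symm q with
    | Sum.inl s => θj s.1 s.2
    | Sum.inr _ => 0 with hθv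
  refine ⟨N, hNpos, A, B, θv, ?_⟩
  intro x hx
  have hBv : ∀ q : Fin N, (B *ᵥ (EuclideanSpace.equiv (Fin n) ℝ) x) q
      = ∑ i, B q i * x i := by
    intro q
    rfl
  have hcomp : ∀ j' : Fin d,
      (A *ᵥ fun q => σhat ((B *ᵥ (EuclideanSpace.equiv (Fin n) ℝ) x) q + θv q)) j'
        = ∑ qq, aj j' qq * σhat (∑ i, bj j' qq i * x i + θj j' qq) := by
    intro j'
    have hstart : (A *ᵥ fun q => σhat ((B *ᵥ (EuclideanSpace.equiv (Fin n) ℝ) x) q + θv q)) j'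
        = ∑ q : Fin N, A j' q * σhat ((∑ i, B q i * x i) + θv q) := by
      have hxi : ∀ i : Fin n, (EuclideanSpace.equiv (Fin n) ℝ) x i = x i := fun i => rfl
      simp only [Matrix.mulVec, dotProduct, hxi]
    rw [hstart]
    calc ∑ q : Fin N, A j' q * σhat ((∑ i, B q i * x i) + θv q)
        = ∑ s : I, A j' (e s) * σhat ((∑ i, B (e s) i * x i) + θv (e s)) :=
          (Equiv.sum_comp e _).symm
      _ = ∑ s : I, (match s with
            | Sum.inl s => if s.1 = j' then aj s.1 s.2 else 0
            | Sum.inr _ => 0) * σhat ((∑ i, (match s with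
            | Sum.inl s => bj s.1 s.2 i
            | Sum.inr _ => 0) * x i) + (match s with
            | Sum.inl s => θj s.1 s.2
            | Sum.inr _ => 0)) := by
          refine Finset.sum_congr rfl fun s _ => ?_
          simp only [hA, hB, hθv, Equiv.symm_apply_apply]
      _ = ∑ s : (j : Fin d) × Fin (kj j), (if s.1 = j' then aj s.1 s.2 else 0)
            * σhat ((∑ i, bj s.1 s.2 i * x i) + θj s.1 s.2) := by
          rw [Fintype.sum_sum_type]
          simp
      _ = ∑ j : Fin d, ∑ qq : Fin (kj j), (if j = j' then aj j qq else 0)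
            * σhat ((∑ i, bj j qq i * x i) + θj j qq) := by
          rw [← Finset.univ_sigma_univ, Finset.sum_sigma]
      _ = ∑ j : Fin d, (if j = j' then
            ∑ qq : Fin (kj j), aj j qq * σhat ((∑ i, bj j qq i * x i) + θj j qq) else 0) := by
          refine Finset.sum_congr rfl fun j _ => ?_
          by_cases h : j = j' <;> simp [h]
      _ = ∑ qq, aj j' qq * σhat (∑ i, bj j' qq i * x i + θj j' qq) := by
          rw [Finset.sum_ite_eq' Finset.univ j'
            (fun j => ∑ qq : Fin (kj j), aj j qq * σhat ((∑ i, bj j qq i * x i) + θj j qq))]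
          simp
  set v : EuclideanSpace ℝ (Fin d) := (EuclideanSpace.equiv (Fin d) ℝ).symm
      (A *ᵥ fun i => σhat ((B *ᵥ (EuclideanSpace.equiv (Fin n) ℝ) x) i + θv i)) with hv
  have hvj : ∀ j : Fin d, v j = ∑ qq, aj j qq * σhat (∑ i, bj j qq i * x i + θj j qq) := by
    intro j
    have : v j = (A *ᵥ fun i => σhat ((B *ᵥ (EuclideanSpace.equiv (Fin n) ℝ) x) i + θv i)) j :=
      rfl
    rw [this, hcomp j]
  have hcoordclose : ∀ j : Fin d, |f x j - v j| ≤ ε' := by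
    intro j
    rw [hvj j]
    exact hj j x hx
  have hnorm : ‖f x - v‖ ≤ Real.sqrt d * ε' := by
    rw [EuclideanSpace.norm_eq]
    have hsum : ∑ j, ‖(f x - v) j‖^2 ≤ ∑ _j : Fin d, ε'^2 := by
      refine Finset.sum_le_sum fun j _ => ?_
      have h1 : (f x - v) j = f x j - v j := rfl
      rw [h1, Real.norm_eq_abs]
      nlinarith [hcoordclose j, abs_nonneg (f x j - v j), hε'pos.le]
    calc Real.sqrt (∑ j, ‖(f x - v) j‖^2) ≤ Real.sqrt (∑ _j : Fin d, ε'^2) :=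
          Real.sqrt_le_sqrt hsum
      _ = Real.sqrt ((d:ℝ) * ε'^2) := by
          rw [Finset.sum_const, Finset.card_univ, Fintype.card_fin, nsmul_eq_mul]
      _ = Real.sqrt d * ε' := by
          rw [Real.sqrt_mul (by positivity), Real.sqrt_sq hε'pos.le]
  refine hnorm.trans ?_
  rw [hε']
  rw [← mul_div_assoc, div_le_iff₀ (by positivity)]
  nlinarith [hsd, hε.le]
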